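/- Let I ⊆ (0,π) be an open interval, let r₂ : I → ℝ be continuous and let r₁ : I → ℝ be differentiable with r₁'(θ) = (r₂(θ) − r₁(θ))·cot(θ) for all θ ∈ I. Then there exists a twice continuously differentiable function r : I → ℝ such that r₁(θ) = r(θ) + r'(θ)·cot(θ) and r₂(θ) = r(θ) + r''(θ) for all θ ∈ I. -/

import Mathlib

/-- Converse of the derived Codazzi–Mainardi equation: if `r₁' = (r₂ - r₁) cot θ` on an
open interval `I ⊆ (0, π)` with `r₂` continuous, then there is a twice continuously
differentiable support function `r` with `r₁ = r + r' cot θ` and `r₂ = r + r''` on `I`. -/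
theorem stmt_8 (lo hi : ℝ) (hI : Set.Ioo lo hi ⊆ Set.Ioo 0 Real.pi)
    (r₁ r₂ : ℝ → ℝ) (hr₂ : ContinuousOn r₂ (Set.Ioo lo hi))
    (hr₁ : ∀ θ ∈ Set.Ioo lo hi, HasDerivAt r₁ ((r₂ θ - r₁ θ) * Real.cot θ) θ) :
    ∃ r r' r'' : ℝ → ℝ,
      (∀ θ ∈ Set.Ioo lo hi, HasDerivAt r (r' θ) θ) ∧
      (∀ θ ∈ Set.Ioo lo hi, HasDerivAt r' (r'' θ) θ) ∧
      ContinuousOn r'' (Set.Ioo lo hi) ∧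
      (∀ θ ∈ Set.Ioo lo hi, r₁ θ = r θ + r' θ * Real.cot θ ∧ r₂ θ = r θ + r'' θ) := by
  rcases le_or_gt hi lo with hle | hlt
  · have hempty : Set.Ioo lo hi = ∅ := Set.Ioo_eq_empty (not_lt.2 hle)
    refine ⟨0, 0, 0, ?_, ?_, ?_, ?_⟩ <;> simp [hempty]
  · set θ₀ : ℝ := (lo + hi) / 2 with hθ₀def
    have hθ₀ : θ₀ ∈ Set.Ioo lo hi := ⟨by simp [hθ₀def]; linarith, by simp [hθ₀def]; linarith⟩
    have hopen : IsOpen (Set.Ioo lo hi) := isOpen_Ioo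
    have hconv : Convex ℝ (Set.Ioo lo hi) := convex_Ioo lo hi
    have hsub : ∀ θ ∈ Set.Ioo lo hi, Set.uIcc θ₀ θ ⊆ Set.Ioo lo hi := fun θ hθ =>
      Set.ordConnected_Ioo.uIcc_subset hθ₀ hθ
    set fc : ℝ → ℝ := fun t => r₂ t * Real.cos t with hfc
    set fs : ℝ → ℝ := fun t => r₂ t * Real.sin t with hfs
    have hfcC : ContinuousOn fc (Set.Ioo lo hi) := hr₂.mul Real.continuous_cos.continuousOn
    have hfsC : ContinuousOn fs (Set.Ioo lo hi) := hr₂.mul Real.continuous_sin.continuousOn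
    set A : ℝ → ℝ := fun θ => ∫ t in θ₀..θ, fc t with hA
    set B : ℝ → ℝ := fun θ => ∫ t in θ₀..θ, fs t with hB
    have hAd : ∀ θ ∈ Set.Ioo lo hi, HasDerivAt A (fc θ) θ := fun θ hθ =>
      intervalIntegral.integral_hasDerivAt_right
        ((hfcC.mono (hsub θ hθ)).intervalIntegrable)
        (hfcC.stronglyMeasurableAtFilter hopen θ hθ)
        (hfcC.continuousAt (hopen.mem_nhds hθ))
    have hBd : ∀ θ ∈ Set.Ioo lo hi, HasDerivAt B (fs θ) θ := fun θ hθ =>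
      intervalIntegral.integral_hasDerivAt_right
        ((hfsC.mono (hsub θ hθ)).intervalIntegrable)
        (hfsC.stronglyMeasurableAtFilter hopen θ hθ)
        (hfsC.continuousAt (hopen.mem_nhds hθ))
    set c : ℝ := r₁ θ₀ with hc
    set r : ℝ → ℝ := fun θ => c * Real.cos (θ - θ₀) + Real.sin θ * A θ - Real.cos θ * B θ
      with hrdef
    set r' : ℝ → ℝ := fun θ => -(c * Real.sin (θ - θ₀)) + Real.cos θ * A θ + Real.sin θ * B θ
      with hr'def
    set r'' : ℝ → ℝ := fun θ => r₂ θ - r θ with hr''def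
    have hrd : ∀ θ ∈ Set.Ioo lo hi, HasDerivAt r (r' θ) θ := by
      intro θ hθ
      have h1 : HasDerivAt (fun x => Real.cos (x - θ₀)) (-Real.sin (θ - θ₀)) θ := by
        simpa [Function.comp_def] using (Real.hasDerivAt_cos (θ - θ₀)).comp θ ((hasDerivAt_id θ).sub_const θ₀)
      have h2 := ((h1.const_mul c).add
        ((Real.hasDerivAt_sin θ).mul (hAd θ hθ))).sub
        ((Real.hasDerivAt_cos θ).mul (hBd θ hθ))
      refine h2.congr_deriv ?_
      symm
      simp only [hr'def, hfc, hfs]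
      ring
    have hr'd : ∀ θ ∈ Set.Ioo lo hi, HasDerivAt r' (r'' θ) θ := by
      intro θ hθ
      have h1 : HasDerivAt (fun x => Real.sin (x - θ₀)) (Real.cos (θ - θ₀)) θ := by
        simpa [Function.comp_def] using (Real.hasDerivAt_sin (θ - θ₀)).comp θ ((hasDerivAt_id θ).sub_const θ₀)
      have h2 := (((h1.const_mul c).neg).add
        ((Real.hasDerivAt_cos θ).mul (hAd θ hθ))).add
        ((Real.hasDerivAt_sin θ).mul (hBd θ hθ))
      refine h2.congr_deriv ?_
      symm
      simp only [hr''def, hrdef, hfc, hfs]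
      linear_combination -(r₂ θ) * Real.sin_sq_add_cos_sq θ
    have hrC : ContinuousOn r (Set.Ioo lo hi) := fun θ hθ =>
      (hrd θ hθ).continuousAt.continuousWithinAt
    have hr''C : ContinuousOn r'' (Set.Ioo lo hi) := hr₂.sub hrC
    set F : ℝ → ℝ := fun θ => r θ * Real.sin θ + r' θ * Real.cos θ - r₁ θ * Real.sin θ
      with hFdef
    have hFd : ∀ θ ∈ Set.Ioo lo hi, HasDerivAt F 0 θ := by
      intro θ hθ
      have hsin : Real.sin θ ≠ 0 :=
        (Real.sin_pos_of_pos_of_lt_pi (hI hθ).1 (hI hθ).2).ne'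
      have hcot : Real.cot θ * Real.sin θ = Real.cos θ := by
        rw [Real.cot_eq_cos_div_sin]; field_simp
      have h2 := (((hrd θ hθ).mul (Real.hasDerivAt_sin θ)).add
        ((hr'd θ hθ).mul (Real.hasDerivAt_cos θ))).sub
        ((hr₁ θ hθ).mul (Real.hasDerivAt_sin θ))
      refine h2.congr_deriv ?_
      symm
      simp only [hr''def]
      linear_combination (r₂ θ - r₁ θ) * hcot
    have hF₀ : F θ₀ = 0 := by
      simp [hFdef, hrdef, hr'def, hA, hB, intervalIntegral.integral_same, hc]
    have hFconst : ∀ θ ∈ Set.Ioo lo hi, F θ = 0 := by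
      intro θ hθ
      rw [← hF₀]
      apply hconv.is_const_of_fderivWithin_eq_zero
        (fun x hx => (hFd x hx).differentiableAt.differentiableWithinAt) ?_ hθ hθ₀
      intro x hx
      rw [fderivWithin_eq_fderiv (hopen.uniqueDiffOn x hx) (hFd x hx).differentiableAt,
        (hFd x hx).hasFDerivAt.fderiv]
      ext
      simp
    refine ⟨r, r', r'', hrd, hr'd, hr''C, ?_⟩
    intro θ hθ
    have hsin : Real.sin θ ≠ 0 :=
      (Real.sin_pos_of_pos_of_lt_pi (hI hθ).1 (hI hθ).2).ne'
    have hF0 : r θ * Real.sin θ + r' θ * Real.cos θ - r₁ θ * Real.sin θ = 0 := hFconst θ hθ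
    constructor
    · rw [Real.cot_eq_cos_div_sin]
      field_simp
      linarith [hF0]
    · simp only [hr''def]; ring
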